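/- Let V be a finite set with n = |V| and f : 2^V → ℝ a submodular function with f(∅) = 0. Let z be the unique point of minimum Euclidean norm in B(f), and set S* = {v ∈ V : z(v) < 0}. Then S* is a minimizer of f over 2^V, every minimizer of f contains S* (i.e., S* is the inclusionwise minimal minimizer), and |f(S*)| ≤ √n · ‖z‖₂. -/

import Mathlib

open Finset

noncomputable section
open scoped Classical

variable {V : Type*} [Fintype V] [DecidableEq V]

/-- A set function `f : 2^V → ℝ` is submodular if
`f(X∩Y) + f(X∪Y) ≤ f(X) + f(Y)` for all `X, Y ⊆ V`. -/
def IsSubmodular (f : Finset V → ℝ) : Prop :=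
  ∀ X Y : Finset V, f (X ∩ Y) + f (X ∪ Y) ≤ f X + f Y

/-- The base polytope `B(f)` of a submodular function. -/
def basePolytope (f : Finset V → ℝ) : Set (V → ℝ) :=
  {x | (∀ S : Finset V, ∑ v ∈ S, x v ≤ f S) ∧ (∑ v, x v) = f Finset.univ}

/-- Exchange argument: if `z` is the min-norm point and `z v < 0 ≤ z u`, there is a tight set
containing `v` but not `u`. -/
lemma exchange_aux (f : Finset V → ℝ) (z : V → ℝ)
    (hzle : ∀ S : Finset V, ∑ w ∈ S, z w ≤ f S)
    (hztot : (∑ w, z w) = f Finset.univ)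
    (hmin : ∀ x ∈ basePolytope f,
      Real.sqrt (∑ v, (z v) ^ 2) ≤ Real.sqrt (∑ v, (x v) ^ 2))
    {v u : V} (hv : z v < 0) (hu : 0 ≤ z u) :
    ∃ S : Finset V, (∑ w ∈ S, z w = f S) ∧ v ∈ S ∧ u ∉ S := by
  by_contra hcon
  push_neg at hcon
  have hne : v ≠ u := fun h => by rw [h] at hv; linarith
  set C : Finset (Finset V) := Finset.univ.filter (fun S => v ∈ S ∧ u ∉ S) with hC
  have hCne : C.Nonempty := ⟨{v}, by simp [hC, Ne.symm hne]⟩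
  have hslack : ∀ S ∈ C, 0 < f S - ∑ w ∈ S, z w := by
    intro S hS
    simp only [hC, Finset.mem_filter] at hS
    rcases lt_or_eq_of_le (hzle S) with h | h
    · linarith
    · exact absurd (hcon S h hS.2.1) hS.2.2
  set δ := C.inf' hCne (fun S => f S - ∑ w ∈ S, z w) with hδ
  have hδpos : 0 < δ := by
    rw [hδ, Finset.lt_inf'_iff]
    exact hslack
  set ε := min (δ / 2) ((z u - z v) / 2) with hε
  have hεpos : 0 < ε := lt_min (by linarith) (by linarith)
  set x : V → ℝ := fun w => z w + ((if w = v then ε else 0) - (if w = u then ε else 0)) with hx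
  have hsum : ∀ S : Finset V, ∑ w ∈ S, x w
      = (∑ w ∈ S, z w) + ((if v ∈ S then ε else 0) - (if u ∈ S then ε else 0)) := by
    intro S
    simp only [hx]
    rw [Finset.sum_add_distrib, Finset.sum_sub_distrib,
      Finset.sum_ite_eq' S v (fun _ => ε), Finset.sum_ite_eq' S u (fun _ => ε)]
  have hxfeas : x ∈ basePolytope f := by
    constructor
    · intro S
      rw [hsum S]
      by_cases hvS : v ∈ S
      · by_cases huS : u ∈ S
        · simpa [hvS, huS] using hzle S
        · have hSC : S ∈ C := by simp [hC, hvS, huS]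
          have h1 := Finset.inf'_le (fun S => f S - ∑ w ∈ S, z w) hSC
          have hεδ : ε ≤ δ / 2 := min_le_left _ _
          simp only [hvS, huS, if_true, if_false]
          rw [← hδ] at h1
          linarith
      · have h2 : 0 ≤ (if u ∈ S then ε else 0) := by
          split <;> simp [le_of_lt hεpos]
        have h3 := hzle S
        simp only [hvS, if_false]
        linarith
    · rw [hsum Finset.univ]
      simp [hztot]
  have hxv : x v = z v + ε := by simp [hx, hne]
  have hxu : x u = z u - ε := by simp [hx, Ne.symm hne]; ring
  have hlt : ∑ w, (x w) ^ 2 < ∑ w, (z w) ^ 2 := by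
    have hdiff : ∑ w ∈ ({v, u} : Finset V), ((x w) ^ 2 - (z w) ^ 2)
        = ∑ w, ((x w) ^ 2 - (z w) ^ 2) := by
      apply Finset.sum_subset (Finset.subset_univ _)
      intro w _ hw
      simp only [Finset.mem_insert, Finset.mem_singleton] at hw
      push_neg at hw
      simp [hx, hw.1, hw.2]
    have hpair : ∑ w ∈ ({v, u} : Finset V), ((x w) ^ 2 - (z w) ^ 2)
        = ((x v) ^ 2 - (z v) ^ 2) + ((x u) ^ 2 - (z u) ^ 2) := Finset.sum_pair hne
    have hsub : ∑ w, ((x w) ^ 2 - (z w) ^ 2) = (∑ w, (x w) ^ 2) - ∑ w, (z w) ^ 2 :=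
      Finset.sum_sub_distrib _ _
    have hεsmall : ε ≤ (z u - z v) / 2 := min_le_right _ _
    have hneg : ((x v) ^ 2 - (z v) ^ 2) + ((x u) ^ 2 - (z u) ^ 2) < 0 := by
      rw [hxv, hxu]
      nlinarith
    linarith [hdiff ▸ hpair, hsub]
  have h1 := hmin x hxfeas
  have h2 : Real.sqrt (∑ w, (x w) ^ 2) < Real.sqrt (∑ w, (z w) ^ 2) :=
    Real.sqrt_lt_sqrt (Finset.sum_nonneg fun w _ => sq_nonneg _) hlt
  linarith

/-- Fujishige's theorem: if `z` is the minimum Euclidean norm point of `B(f)`, then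
`S* = {v : z(v) < 0}` is the inclusionwise minimal minimizer of `f`, and
`|f(S*)| ≤ √n ‖z‖₂`. -/
theorem fujishige_min_norm (f : Finset V → ℝ) (hf : IsSubmodular f) (h0 : f ∅ = 0)
    (z : V → ℝ) (hz : z ∈ basePolytope f)
    (hmin : ∀ x ∈ basePolytope f,
      Real.sqrt (∑ v, (z v) ^ 2) ≤ Real.sqrt (∑ v, (x v) ^ 2)) :
    (∀ T : Finset V, f (Finset.univ.filter fun v => z v < 0) ≤ f T) ∧
    (∀ T : Finset V, (∀ T' : Finset V, f T ≤ f T') →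
      (Finset.univ.filter fun v => z v < 0) ⊆ T) ∧
    |f (Finset.univ.filter fun v => z v < 0)| ≤
      Real.sqrt (Fintype.card V) * Real.sqrt (∑ v, (z v) ^ 2) := by
  classical
  obtain ⟨hzle, hztot⟩ := hz
  set Sstar : Finset V := Finset.univ.filter (fun v => z v < 0) with hSs
  have hmemS : ∀ w, w ∈ Sstar ↔ z w < 0 := by intro w; simp [hSs]
  have tight_univ : ∑ w ∈ (Finset.univ : Finset V), z w = f Finset.univ := hztot
  have tight_empty : ∑ w ∈ (∅ : Finset V), z w = f ∅ := by simp [h0]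
  have tight_binop : ∀ S T : Finset V, (∑ w ∈ S, z w = f S) → (∑ w ∈ T, z w = f T) →
      (∑ w ∈ S ∩ T, z w = f (S ∩ T)) ∧ (∑ w ∈ S ∪ T, z w = f (S ∪ T)) := by
    intro S T hS hT
    have h1 := hzle (S ∩ T)
    have h2 := hzle (S ∪ T)
    have h3 := hf S T
    have h4 : ∑ w ∈ S ∪ T, z w + ∑ w ∈ S ∩ T, z w = ∑ w ∈ S, z w + ∑ w ∈ T, z w :=
      Finset.sum_union_inter
    constructor <;> linarith
  have tight_inf : ∀ (A : Finset V) (g : V → Finset V),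
      (∀ i ∈ A, ∑ w ∈ g i, z w = f (g i)) → ∑ w ∈ A.inf g, z w = f (A.inf g) := by
    intro A
    induction A using Finset.cons_induction with
    | empty =>
      intro g _
      simpa [Finset.inf_empty, Finset.top_eq_univ] using tight_univ
    | cons a A ha ih =>
      intro g hg
      rw [Finset.inf_cons, Finset.inf_eq_inter]
      exact (tight_binop _ _ (hg a (Finset.mem_cons_self a A))
        (ih g (fun i hi => hg i (Finset.mem_cons_of_mem hi)))).1
  have tight_sup : ∀ (A : Finset V) (g : V → Finset V),
      (∀ i ∈ A, ∑ w ∈ g i, z w = f (g i)) → ∑ w ∈ A.sup g, z w = f (A.sup g) := by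
    intro A
    induction A using Finset.cons_induction with
    | empty =>
      intro g _
      simpa [Finset.sup_empty, Finset.bot_eq_empty] using tight_empty
    | cons a A ha ih =>
      intro g hg
      rw [Finset.sup_cons, Finset.sup_eq_union]
      exact (tight_binop _ _ (hg a (Finset.mem_cons_self a A))
        (ih g (fun i hi => hg i (Finset.mem_cons_of_mem hi)))).2
  have key : ∀ v, z v < 0 → ∃ T : Finset V, (∑ w ∈ T, z w = f T) ∧ v ∈ T ∧ T ⊆ Sstar := by
    intro v hv
    have hex : ∀ u : V, ∃ S : Finset V,
        (∑ w ∈ S, z w = f S) ∧ v ∈ S ∧ (0 ≤ z u → u ∉ S) := by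
      intro u
      by_cases hu : 0 ≤ z u
      · obtain ⟨S, h1, h2, h3⟩ := exchange_aux f z hzle hztot hmin hv hu
        exact ⟨S, h1, h2, fun _ => h3⟩
      · exact ⟨Finset.univ, tight_univ, Finset.mem_univ v, fun h => absurd h hu⟩
    choose g hg1 hg2 hg3 using hex
    refine ⟨Finset.univ.inf g, tight_inf _ _ (fun i _ => hg1 i), ?_, ?_⟩
    · have h : ({v} : Finset V) ≤ Finset.univ.inf g :=
        Finset.le_inf (fun u _ => Finset.singleton_subset_iff.mpr (hg2 u))
      exact Finset.singleton_subset_iff.mp h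
    · intro u hu
      rw [hmemS]
      by_contra hnn
      push_neg at hnn
      exact hg3 u hnn ((Finset.le_iff_subset.mp (Finset.inf_le (Finset.mem_univ u))) hu)
  have tight_Sstar : ∑ w ∈ Sstar, z w = f Sstar := by
    have hex : ∀ v : V, ∃ T : Finset V,
        (∑ w ∈ T, z w = f T) ∧ (z v < 0 → v ∈ T) ∧ T ⊆ Sstar := by
      intro v
      by_cases hv : z v < 0
      · obtain ⟨T, h1, h2, h3⟩ := key v hv
        exact ⟨T, h1, fun _ => h2, h3⟩
      · exact ⟨∅, tight_empty, fun h => absurd h hv, Finset.empty_subset _⟩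
    choose g hg1 hg2 hg3 using hex
    have hSeq : Sstar.sup g = Sstar := by
      apply Finset.Subset.antisymm
      · exact Finset.le_iff_subset.mp (Finset.sup_le fun b _ => Finset.le_iff_subset.mpr (hg3 b))
      · intro v hv
        exact (Finset.le_iff_subset.mp (Finset.le_sup hv)) (hg2 v ((hmemS v).mp hv))
    have h := tight_sup Sstar g (fun i _ => hg1 i)
    rwa [hSeq] at h
  have part1 : ∀ T : Finset V, f Sstar ≤ f T := by
    intro T
    have heq1 : ∑ w ∈ Sstar \ (T ∩ Sstar), z w + ∑ w ∈ T ∩ Sstar, z w = ∑ w ∈ Sstar, z w :=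
      Finset.sum_sdiff Finset.inter_subset_right
    have hnp : ∑ w ∈ Sstar \ (T ∩ Sstar), z w ≤ 0 :=
      Finset.sum_nonpos fun w hw => le_of_lt ((hmemS w).mp (Finset.mem_sdiff.mp hw).1)
    have heq2 : ∑ w ∈ T \ (T ∩ Sstar), z w + ∑ w ∈ T ∩ Sstar, z w = ∑ w ∈ T, z w :=
      Finset.sum_sdiff Finset.inter_subset_left
    have hnn : 0 ≤ ∑ w ∈ T \ (T ∩ Sstar), z w := by
      apply Finset.sum_nonneg
      intro w hw
      have h := Finset.mem_sdiff.mp hw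
      have hns : w ∉ Sstar := fun hc => h.2 (Finset.mem_inter.mpr ⟨h.1, hc⟩)
      rw [hmemS] at hns
      linarith [not_lt.mp hns]
    have h3 := hzle T
    linarith [tight_Sstar]
  have part2 : ∀ T : Finset V, (∀ T' : Finset V, f T ≤ f T') → Sstar ⊆ T := by
    intro T hT
    by_contra hns
    obtain ⟨v, hvS, hvT⟩ := Finset.not_subset.mp hns
    have heq1 : ∑ w ∈ Sstar \ (T ∩ Sstar), z w + ∑ w ∈ T ∩ Sstar, z w = ∑ w ∈ Sstar, z w :=
      Finset.sum_sdiff Finset.inter_subset_right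
    have hneg : ∑ w ∈ Sstar \ (T ∩ Sstar), z w < 0 := by
      have hne : (Sstar \ (T ∩ Sstar)).Nonempty :=
        ⟨v, Finset.mem_sdiff.mpr ⟨hvS, fun hc => hvT (Finset.mem_inter.mp hc).1⟩⟩
      have h := Finset.sum_lt_sum_of_nonempty hne
        (g := fun _ => (0 : ℝ)) (fun w hw => (hmemS w).mp (Finset.mem_sdiff.mp hw).1)
      simpa using h
    have h1 := hzle (T ∩ Sstar)
    have h2 := hf T Sstar
    have h3 := hT (T ∪ Sstar)
    linarith [tight_Sstar]
  refine ⟨part1, part2, ?_⟩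
  have habs : |f Sstar| = - ∑ w ∈ Sstar, z w := by
    have h1 : f Sstar ≤ 0 := by simpa [h0] using part1 ∅
    rw [abs_of_nonpos h1, tight_Sstar]
  have hb : - ∑ w ∈ Sstar, z w ≤ ∑ w, |z w| := by
    calc - ∑ w ∈ Sstar, z w = ∑ w ∈ Sstar, -z w := by rw [Finset.sum_neg_distrib]
      _ ≤ ∑ w ∈ Sstar, |z w| := Finset.sum_le_sum fun w _ => neg_le_abs _
      _ ≤ ∑ w, |z w| := Finset.sum_le_sum_of_subset_of_nonneg (Finset.subset_univ _)
          (fun w _ _ => abs_nonneg _)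
  have hcs : ∑ w, |z w| ≤ Real.sqrt (Fintype.card V) * Real.sqrt (∑ w, (z w) ^ 2) := by
    have h := Real.sum_mul_le_sqrt_mul_sqrt Finset.univ (fun _ => (1 : ℝ)) (fun w => |z w|)
    simpa [sq_abs, Finset.card_univ] using h
  rw [habs]
  exact le_trans hb hcs
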